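/- arXiv:1806.07172 — 2 statements merged into one kernel-verified Lean document; each statement's English description precedes it below -/
import Mathlib

section
/- Let D be a directed mixed graph obtained from a graph G by adding, for some subset S of vertices of G, new 'transportability' vertices T_v (one per v ∈ S), each with a single outgoing edge T_v → v and no other incident edges. Let X, Y, Z be disjoint sets of vertices of G (containing no transportability vertices). Then for every subset T′ of the transportability vertices, X and Y are d-separated by Z ∪ T′ in D if and only if X and Y are d-separated by Z in G. -/
open Relation

/-- A semi-Markovian (directed mixed) graph: directed and bidirected edges. -/
structure MixedGraph (V : Type*) where
  dir : V → V → Prop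
  bidir : V → V → Prop

namespace MixedGraph

variable {V : Type*} (G : MixedGraph V)

/-- Adjacency: some edge (directed either way, or bidirected) joins `a` and `b`. -/
def adj (a b : V) : Prop := G.dir a b ∨ G.dir b a ∨ G.bidir a b ∨ G.bidir b a

/-- The edge between `a` and `m` points into `m`. -/
def into (a m : V) : Prop := G.dir a m ∨ G.bidir a m ∨ G.bidir m a

/-- Descendants of a set (including the set itself), via directed paths. -/
def desc (S : Set V) : Set V := {v | ∃ s ∈ S, ReflTransGen G.dir s v}

/-- `p` is a path from `x` to `y`: distinct vertices, consecutive ones adjacent. -/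
def isPathBetween (p : List V) (x y : V) : Prop :=
  p.Nodup ∧ p.Chain' G.adj ∧ p.head? = some x ∧ p.getLast? = some y

/-- `m` is a collider between `i` and `j`: both edges point into `m`. -/
def collider (i m j : V) : Prop := G.into i m ∧ G.into j m

/-- The path `p` is d-separated (blocked) by `Z`. -/
def blocked (Z : Set V) (p : List V) : Prop :=
  ∃ (l₁ l₂ : List V) (i m j : V), p = l₁ ++ i :: m :: j :: l₂ ∧
    ((¬ G.collider i m j ∧ m ∈ Z) ∨ (G.collider i m j ∧ G.desc {m} ∩ Z = ∅))

/-- `X` and `Y` are d-separated by `Z` in `G`. -/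
def dSep (X Y Z : Set V) : Prop :=
  ∀ x ∈ X, ∀ y ∈ Y, ∀ p : List V, G.isPathBetween p x y → G.blocked Z p

end MixedGraph

/-- The transportability diagram obtained from `G` by adding, for each `v ∈ S`, a new
transportability vertex with a single outgoing edge into `v` and no other incident edges. -/
def addTransport {V : Type*} (G : MixedGraph V) (S : Set V) : MixedGraph (V ⊕ S) where
  dir a b :=
    match a, b with
    | Sum.inl a, Sum.inl b => G.dir a b
    | Sum.inr t, Sum.inl v => (t : V) = v
    | _, _ => False
  bidir a b :=
    match a, b with
    | Sum.inl a, Sum.inl b => G.bidir a b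
    | _, _ => False

namespace TransportAux
variable {V : Type*} {G : MixedGraph V} {S : Set V}

lemma adj_inl {a b : V} :
    (addTransport G S).adj (Sum.inl a) (Sum.inl b) ↔ G.adj a b := by
  simp [MixedGraph.adj, addTransport]

lemma into_inl {a b : V} :
    (addTransport G S).into (Sum.inl a) (Sum.inl b) ↔ G.into a b := by
  simp [MixedGraph.into, addTransport]

lemma collider_inl {i m j : V} :
    (addTransport G S).collider (Sum.inl i) (Sum.inl m) (Sum.inl j) ↔ G.collider i m j := by
  simp [MixedGraph.collider, into_inl]

lemma adj_inr_left {t : S} {u : V ⊕ S} (h : (addTransport G S).adj (Sum.inr t) u) :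
    u = Sum.inl (t : V) := by
  cases u <;> simp_all [MixedGraph.adj, addTransport]

lemma adj_inr_right {t : S} {u : V ⊕ S} (h : (addTransport G S).adj u (Sum.inr t)) :
    u = Sum.inl (t : V) := by
  cases u <;> simp_all [MixedGraph.adj, addTransport]

lemma mem_range_inl_of_path {p : List (V ⊕ S)} {x y : V}
    (hp : (addTransport G S).isPathBetween p (Sum.inl x) (Sum.inl y)) :
    ∀ u ∈ p, ∃ v : V, u = Sum.inl v := by
  obtain ⟨hnd, hch, hh, hl⟩ := hp
  intro u hu
  rcases u with v | t
  · exact ⟨v, rfl⟩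
  exfalso
  obtain ⟨l₁, l₂, rfl⟩ := List.append_of_mem hu
  rcases l₁.eq_nil_or_concat with rfl | ⟨l₀, c, rfl⟩
  · simp at hh
  rcases l₂ with _ | ⟨b, l₂⟩
  · rw [← List.concat_eq_append, List.concat_eq_append, List.getLast?_concat] at hl
    aesop
  rw [List.concat_eq_append, List.append_assoc, List.singleton_append] at hch hnd
  have h1 := List.isChain_append_cons_cons.mp hch
  have hc : c = Sum.inl (t : V) := adj_inr_right h1.2.1
  have hb : b = Sum.inl (t : V) := adj_inr_left (List.isChain_cons_cons.mp h1.2.2).1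
  have hnd' : (c :: Sum.inr t :: b :: l₂).Nodup :=
    hnd.sublist (List.sublist_append_right _ _)
  simp [hc, hb] at hnd'

lemma exists_map_inl {p : List (V ⊕ S)} (h : ∀ u ∈ p, ∃ v : V, u = Sum.inl v) :
    ∃ q : List V, p = q.map Sum.inl := by
  induction p with
  | nil => exact ⟨[], rfl⟩
  | cons a p ih =>
    obtain ⟨v, rfl⟩ := h a List.mem_cons_self
    obtain ⟨q, rfl⟩ := ih (fun u hu => h u (List.mem_cons_of_mem _ hu))
    exact ⟨v :: q, rfl⟩

lemma isPathBetween_map {q : List V} {x y : V} :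
    (addTransport G S).isPathBetween (q.map Sum.inl) (Sum.inl x) (Sum.inl y) ↔
      G.isPathBetween q x y := by
  unfold MixedGraph.isPathBetween
  unfold List.Chain'
  rw [List.nodup_map_iff Sum.inl_injective, List.isChain_map, List.head?_map,
    List.getLast?_map]
  constructor
  · rintro ⟨h1, h2, h3, h4⟩
    refine ⟨h1, h2.imp fun a b h => adj_inl.mp h, ?_, ?_⟩ <;>
      aesop
  · rintro ⟨h1, h2, h3, h4⟩
    exact ⟨h1, h2.imp fun a b h => adj_inl.mpr h, by simp [h3], by simp [h4]⟩

lemma reach_inl {m : V} {u : V ⊕ S}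
    (h : ReflTransGen (addTransport G S).dir (Sum.inl m) u) :
    ∃ v : V, u = Sum.inl v ∧ ReflTransGen G.dir m v := by
  induction h with
  | refl => exact ⟨m, rfl, ReflTransGen.refl⟩
  | @tail b c _ hd ih =>
    obtain ⟨v, rfl, hv⟩ := ih
    rcases c with w | t
    · exact ⟨w, rfl, hv.tail hd⟩
    · exact absurd hd (by simp [addTransport])

lemma desc_inl {m : V} :
    (addTransport G S).desc {Sum.inl m} = Sum.inl '' G.desc {m} := by
  ext u
  constructor
  · rintro ⟨s, rfl, hr⟩
    obtain ⟨v, rfl, hv⟩ := reach_inl hr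
    exact ⟨v, ⟨m, rfl, hv⟩, rfl⟩
  · rintro ⟨v, ⟨s, rfl, hr⟩, rfl⟩
    exact ⟨Sum.inl s, rfl, hr.lift Sum.inl fun _ _ h => h⟩

lemma blocked_map {q : List V} {Z : Set V} {T' : Set (V ⊕ S)}
    (hT' : T' ⊆ Set.range (Sum.inr : S → V ⊕ S)) :
    (addTransport G S).blocked (Sum.inl '' Z ∪ T') (q.map Sum.inl) ↔ G.blocked Z q := by
  constructor
  · rintro ⟨l₁, l₂, i, m, j, hdec, hcond⟩
    have hmem : ∀ u ∈ l₁ ++ i :: m :: j :: l₂, ∃ v : V, u = Sum.inl v := by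
      intro u hu
      have : u ∈ q.map Sum.inl := hdec ▸ hu
      simpa using (List.mem_map.mp this).imp fun v hv => hv.2.symm
    obtain ⟨q₁, rfl⟩ := exists_map_inl (p := l₁) fun u hu => hmem u (by simp [hu])
    obtain ⟨i', rfl⟩ := hmem i (by simp)
    obtain ⟨m', rfl⟩ := hmem m (by simp)
    obtain ⟨j', rfl⟩ := hmem j (by simp)
    obtain ⟨q₂, rfl⟩ := exists_map_inl (p := l₂) fun u hu => hmem u (by simp [hu])
    have hq : q = q₁ ++ i' :: m' :: j' :: q₂ := by
      apply List.map_injective_iff.mpr Sum.inl_injective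
      simpa using hdec
    refine ⟨q₁, q₂, i', m', j', hq, ?_⟩
    rcases hcond with ⟨hnc, hm⟩ | ⟨hc, hd⟩
    · refine Or.inl ⟨fun h => hnc (collider_inl.mpr h), ?_⟩
      rcases hm with hm | hm
      · obtain ⟨z, hz, hez⟩ := hm
        exact (Sum.inl_injective hez) ▸ hz
      · exact absurd (hT' hm) (by simp)
    · refine Or.inr ⟨collider_inl.mp hc, ?_⟩
      ext v
      simp only [Set.mem_inter_iff, Set.mem_empty_iff_false, iff_false, not_and]
      intro hdv hzv
      have : Sum.inl v ∈ (addTransport G S).desc {Sum.inl m'} ∩ (Sum.inl '' Z ∪ T') :=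
        ⟨desc_inl ▸ ⟨v, hdv, rfl⟩, Or.inl ⟨v, hzv, rfl⟩⟩
      rw [hd] at this
      exact this
  · rintro ⟨l₁, l₂, i, m, j, hdec, hcond⟩
    refine ⟨l₁.map Sum.inl, l₂.map Sum.inl, Sum.inl i, Sum.inl m, Sum.inl j,
      by simp [hdec], ?_⟩
    rcases hcond with ⟨hnc, hm⟩ | ⟨hc, hd⟩
    · exact Or.inl ⟨fun h => hnc (collider_inl.mp h), Or.inl ⟨m, hm, rfl⟩⟩
    · refine Or.inr ⟨collider_inl.mpr hc, ?_⟩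
      rw [desc_inl]
      ext u
      simp only [Set.mem_inter_iff, Set.mem_empty_iff_false, iff_false, not_and]
      rintro ⟨v, hv, rfl⟩ (⟨z, hz, hez⟩ | hmem)
      · have : v ∈ G.desc {m} ∩ Z := ⟨hv, (Sum.inl_injective hez) ▸ hz⟩
        rw [hd] at this; exact this
      · exact absurd (hT' hmem) (by simp)

end TransportAux

/-- For disjoint sets `X, Y, Z` of vertices of `G` and every subset `T'` of the
transportability vertices, `X` and `Y` are d-separated by `Z ∪ T'` in the transportability
diagram `D` iff `X` and `Y` are d-separated by `Z` in `G`. -/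
theorem transport_dSep_iff {V : Type*} (G : MixedGraph V) (S : Set V)
    (X Y Z : Set V) (hXY : Disjoint X Y) (hXZ : Disjoint X Z) (hYZ : Disjoint Y Z)
    (T' : Set (V ⊕ S)) (hT' : T' ⊆ Set.range (Sum.inr : S → V ⊕ S)) :
    (addTransport G S).dSep (Sum.inl '' X) (Sum.inl '' Y) (Sum.inl '' Z ∪ T') ↔
      G.dSep X Y Z := by
  constructor
  · intro h x hx y hy q hq
    exact (TransportAux.blocked_map hT').mp
      (h _ ⟨x, hx, rfl⟩ _ ⟨y, hy, rfl⟩ _ (TransportAux.isPathBetween_map.mpr hq))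
  · rintro h _ ⟨x, hx, rfl⟩ _ ⟨y, hy, rfl⟩ p hp
    obtain ⟨q, rfl⟩ := TransportAux.exists_map_inl (TransportAux.mem_range_inl_of_path hp)
    exact (TransportAux.blocked_map hT').mpr
      (h x hx y hy q (TransportAux.isPathBetween_map.mp hp))
end

section
/- Let G be a DAG and Z a set of vertices. If a vertex v is not a descendant of any vertex of Z in G, then the set of ancestors of v in G equals the set of ancestors of v in the mutilated graph G[Z-bar] intersected with the non-descendants of Z, and in particular An(v)_{G[Z-bar]} ⊇ An(v)_G ∩ (V \ De(Z)_G \ Z) and v ∉ De(Z)_{G[Z-bar]} \ {v}. -/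
open Relation

variable {V : Type*}

/-- `An(S)_G`: `S` together with all ancestors of vertices of `S` in the directed graph `G`. -/
def anc (G : V → V → Prop) (S : Set V) : Set V := {v | ∃ s ∈ S, ReflTransGen G v s}

/-- `De(S)_G`: `S` together with all descendants of vertices of `S` in `G`. -/
def des (G : V → V → Prop) (S : Set V) : Set V := {v | ∃ s ∈ S, ReflTransGen G s v}

/-- `G[Z-bar]`: the mutilated graph obtained from `G` by deleting all edges whose head is
in `Z`. -/
def mutilate (G : V → V → Prop) (Z : Set V) : V → V → Prop := fun a b => G a b ∧ b ∉ Z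

/-- In a DAG `G`, if `v` is not a descendant of any vertex of `Z`, then
the ancestors of `v` in `G` are exactly the ancestors of `v` in the mutilated graph
`G[Z-bar]` that are non-descendants of `Z`; in particular
`An(v)_{G[Z-bar]} ⊇ An(v)_G ∩ ((V \ De(Z)_G) \ Z)` and `v ∉ De(Z)_{G[Z-bar]} \ {v}`. -/
theorem anc_nondescendant_mutilate (G : V → V → Prop)
    (hacyc : ∀ v, ¬ TransGen G v v) (Z : Set V) (v : V)
    (hv : v ∉ des G Z) :
    anc G {v} = anc (mutilate G Z) {v} ∩ {u | u ∉ des G Z} ∧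
    anc G {v} ∩ ((Set.univ \ des G Z) \ Z) ⊆ anc (mutilate G Z) {v} ∧
    v ∉ des (mutilate G Z) Z \ {v} := by
  -- any path to `v` in `G` stays in the mutilated graph
  have key : ∀ u, ReflTransGen G u v → ReflTransGen (mutilate G Z) u v := by
    intro u huv
    induction huv using ReflTransGen.head_induction_on with
    | refl => exact ReflTransGen.refl
    | head hac hcb ih =>
        refine ReflTransGen.head ⟨hac, ?_⟩ ih
        intro hcZ
        exact hv ⟨_, hcZ, hcb⟩
  have nondes : ∀ u, ReflTransGen G u v → u ∉ des G Z := by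
    rintro u huv ⟨s, hsZ, hsu⟩
    exact hv ⟨s, hsZ, hsu.trans huv⟩
  refine ⟨?_, ?_, ?_⟩
  · ext u
    constructor
    · rintro ⟨s, rfl, huv⟩
      exact ⟨⟨_, rfl, key u huv⟩, nondes u huv⟩
    · rintro ⟨⟨s, rfl, huv⟩, _⟩
      exact ⟨_, rfl, ReflTransGen.mono (fun _ _ h => h.1) _ _ huv⟩
  · rintro u ⟨⟨s, rfl, huv⟩, _⟩
    exact ⟨_, rfl, key u huv⟩
  · rintro ⟨⟨s, hsZ, hsv⟩, _⟩
    exact hv ⟨s, hsZ, ReflTransGen.mono (fun _ _ h => h.1) _ _ hsv⟩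
end
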